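/- Every idempotent semigroup with at least 6 elements has a subsemigroup of order exactly 6. -/

import Mathlib

set_option linter.unusedSectionVars false

namespace Band6

variable {S : Type*} [Semigroup S]

/-- `a` is J-below `b`. -/
def ple (a b : S) : Prop := a * b * a = a
/-- `a` and `b` are J-equivalent. -/
def Jr (a b : S) : Prop := a * b * a = a ∧ b * a * b = b
/-- same L-class -/
def Lr (a b : S) : Prop := a * b = a ∧ b * a = b
/-- same R-class -/
def Rr (a b : S) : Prop := a * b = b ∧ b * a = a

section core
variable (hidem : ∀ x : S, x * x = x)
include hidem

/-- KEY identity: any element of the form u*c*v is J-below c. -/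
lemma L1 (u c v : S) : ple (u*c*v) c := by
  show (u*c*v)*c*(u*c*v) = u*c*v
  calc (u*c*v)*c*(u*c*v) = (u*c*v*c*u)*(c*v) := by simp only [mul_assoc]
    _ = (u*c*v*c*u)*((c*v)*(c*v)) := by rw [hidem (c*v)]
    _ = ((u*(c*(v*c)))*(u*(c*(v*c))))*v := by simp only [mul_assoc]
    _ = (u*(c*(v*c)))*v := by rw [hidem (u*(c*(v*c)))]
    _ = u*((c*v)*(c*v)) := by simp only [mul_assoc]
    _ = u*(c*v) := by rw [hidem (c*v)]
    _ = u*c*v := by rw [mul_assoc]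

lemma ple_refl (a : S) : ple a a := by show a*a*a = a; rw [hidem, hidem]

/-- KEY meet lemma. -/
lemma ple_meet {a p q : S} (h1 : ple a p) (h2 : ple a q) : ple a (p*q) := by
  have h1 : a*p*a = a := h1
  have h2 : a*q*a = a := h2
  show a*(p*q)*a = a
  calc a*(p*q)*a = (a*q*a)*(p*q)*(a*p*a) := by rw [h2, h1]
    _ = (a*((q*(a*p))*(q*(a*p))))*a := by simp only [mul_assoc]
    _ = (a*(q*(a*p)))*a := by rw [hidem (q*(a*p))]
    _ = a*q*(a*p*a) := by simp only [mul_assoc]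
    _ = a*q*a := by rw [h1]
    _ = a := h2

lemma ple_trans {a b c : S} (h1 : ple a b) (h2 : ple b c) : ple a c := by
  have h1' : a*b*a = a := h1
  have h2' : b*c*b = b := h2
  have e : a = (a*b)*c*(b*a) := by
    conv_lhs => rw [← h1', ← h2']
    simp only [mul_assoc]
  show a*c*a = a
  calc a*c*a = ((a*b)*c*(b*a))*c*((a*b)*c*(b*a)) := by rw [← e]
    _ = (a*b)*c*(b*a) := L1 hidem (a*b) c (b*a)
    _ = a := e.symm

lemma ple_mul_left (a b : S) : ple (a*b) a := by
  have := L1 hidem a a b; rwa [hidem a] at this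

lemma ple_mul_right (a b : S) : ple (a*b) b := by
  have := L1 hidem a b b; rwa [mul_assoc a b b, hidem b] at this

lemma ple_compat_left {a c : S} (h : ple a c) (b : S) : ple (a*b) c := by
  have h' : a*c*a = a := h
  have e : a*b = a*c*(a*b) := by
    conv_lhs => rw [← h']
    simp only [mul_assoc]
  show (a*b)*c*(a*b) = a*b
  calc (a*b)*c*(a*b) = (a*c*(a*b))*c*(a*c*(a*b)) := by rw [← e]
    _ = a*c*(a*b) := L1 hidem a c (a*b)
    _ = a*b := e.symm

lemma ple_compat_right {a c : S} (h : ple a c) (b : S) : ple (b*a) c := by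
  have h' : a*c*a = a := h
  have e : b*a = (b*a)*c*a := by
    conv_lhs => rw [← h']
    simp only [mul_assoc]
  show (b*a)*c*(b*a) = b*a
  calc (b*a)*c*(b*a) = ((b*a)*c*a)*c*((b*a)*c*a) := by rw [← e]
    _ = (b*a)*c*a := L1 hidem (b*a) c a
    _ = b*a := e.symm

lemma Jr_refl (a : S) : Jr a a := ⟨ple_refl hidem a, ple_refl hidem a⟩

lemma Jr_symm {a b : S} (h : Jr a b) : Jr b a := ⟨h.2, h.1⟩

lemma Jr_trans {a b c : S} (h1 : Jr a b) (h2 : Jr b c) : Jr a c :=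
  ⟨ple_trans hidem h1.1 h2.1, ple_trans hidem h2.2 h1.2⟩

lemma Jr_mul_left {a b : S} (h : Jr a b) (c : S) : Jr (a*c) (b*c) := by
  constructor
  · exact ple_meet hidem (ple_compat_left hidem h.1 c) (ple_mul_right hidem a c)
  · exact ple_meet hidem (ple_compat_left hidem h.2 c) (ple_mul_right hidem b c)

lemma Jr_mul_right {a b : S} (h : Jr a b) (c : S) : Jr (c*a) (c*b) := by
  constructor
  · exact ple_meet hidem (ple_mul_left hidem c a) (ple_compat_right hidem h.1 c)
  · exact ple_meet hidem (ple_mul_left hidem c b) (ple_compat_right hidem h.2 c)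

lemma comm_aux (a b : S) : (a*b)*(b*a)*(a*b) = a*b := by
  calc (a*b)*(b*a)*(a*b) = a*((b*b)*((a*a)*b)) := by simp only [mul_assoc]
    _ = a*(b*(a*b)) := by rw [hidem b, hidem a]
    _ = (a*b)*(a*b) := by simp only [mul_assoc]
    _ = a*b := hidem _

lemma Jr_comm (a b : S) : Jr (a*b) (b*a) := ⟨comm_aux hidem a b, comm_aux hidem b a⟩

/-- the class of `a` is closed under multiplication -/
lemma Jr_absorb {a b : S} (h : Jr a b) : Jr a (a*b) := by
  constructor
  · show a*(a*b)*a = a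
    calc a*(a*b)*a = (a*a)*b*a := by simp only [mul_assoc]
      _ = a*b*a := by rw [hidem a]
      _ = a := h.1
  · exact ple_mul_left hidem a b

lemma Lr_refl (a : S) : Lr a a := ⟨hidem a, hidem a⟩
lemma Lr_symm {a b : S} (h : Lr a b) : Lr b a := ⟨h.2, h.1⟩
lemma Lr_trans {a b c : S} (h1 : Lr a b) (h2 : Lr b c) : Lr a c := by
  obtain ⟨ab, ba⟩ := h1; obtain ⟨bc, cb⟩ := h2
  constructor
  · calc a*c = (a*b)*c := by rw [ab]
      _ = a*(b*c) := by rw [mul_assoc]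
      _ = a*b := by rw [bc]
      _ = a := ab
  · calc c*a = (c*b)*a := by rw [cb]
      _ = c*(b*a) := by rw [mul_assoc]
      _ = c*b := by rw [ba]
      _ = c := cb

lemma Rr_refl (a : S) : Rr a a := ⟨hidem a, hidem a⟩
lemma Rr_symm {a b : S} (h : Rr a b) : Rr b a := ⟨h.2, h.1⟩
lemma Rr_trans {a b c : S} (h1 : Rr a b) (h2 : Rr b c) : Rr a c := by
  obtain ⟨ab, ba⟩ := h1; obtain ⟨bc, cb⟩ := h2
  constructor
  · calc a*c = a*(b*c) := by rw [bc]
      _ = (a*b)*c := by rw [mul_assoc]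
      _ = b*c := by rw [ab]
      _ = c := bc
  · calc c*a = c*(b*a) := by rw [ba]
      _ = (c*b)*a := by rw [mul_assoc]
      _ = b*a := by rw [cb]
      _ = a := ba

lemma RL_eq {a b : S} (hR : Rr a b) (hL : Lr a b) : a = b := by
  have h1 : a*b = b := hR.1
  have h2 : a*b = a := hL.1
  rw [← h2, h1]

lemma Rr_mul {a b : S} (h : Jr a b) : Rr a (a*b) := by
  constructor
  · calc a*(a*b) = (a*a)*b := by rw [mul_assoc]
      _ = a*b := by rw [hidem a]
  · exact h.1

lemma Lr_mul {a b : S} (h : Jr a b) : Lr (a*b) b := by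
  constructor
  · calc (a*b)*b = a*(b*b) := by rw [mul_assoc]
      _ = a*b := by rw [hidem b]
  · show b*(a*b) = b
    rw [← mul_assoc]; exact h.2

/-- in a rectangular class, x*y*z = x*z -/
lemma E1 {x y z : S} (hxy : Jr x y) (hyz : Jr y z) (hxz : Jr x z) : x*y*z = x*z := by
  have hxyz : Jr x (y*z) := Jr_trans hidem hxy (Jr_absorb hidem hyz)
  have hzxy : Jr z (x*y) := Jr_trans hidem (Jr_symm hidem hxz) (Jr_absorb hidem hxy)
  have hRk : Rr x (x*z) := Rr_mul hidem hxz
  have hRw : Rr x (x*(y*z)) := by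
    constructor
    · calc x*(x*(y*z)) = (x*x)*(y*z) := by rw [mul_assoc]
        _ = x*(y*z) := by rw [hidem x]
    · exact hxyz.1
  have hLk : Lr (x*z) z := Lr_mul hidem hxz
  have hLw : Lr (x*(y*z)) z := by
    constructor
    · calc (x*(y*z))*z = x*(y*(z*z)) := by simp only [mul_assoc]
        _ = x*(y*z) := by rw [hidem z]
    · calc z*(x*(y*z)) = (z*(x*y))*z := by simp only [mul_assoc]
        _ = z := hzxy.1
  have hR : Rr (x*z) (x*(y*z)) := Rr_trans hidem (Rr_symm hidem hRk) hRw
  have hL : Lr (x*z) (x*(y*z)) := Lr_trans hidem hLk (Lr_symm hidem hLw)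
  have := RL_eq hidem hR hL
  rw [mul_assoc]; exact this.symm

/-- multiplication inside a rectangular class: (a*c)*(a'*c') = a*c' -/
lemma rect_mul {a c a' c' : S} (h1 : Jr c a') (h2 : Jr a' c') (h3 : Jr c c')
    (h4 : Jr a c) (h5 : Jr a c') : (a*c)*(a'*c') = a*c' := by
  calc (a*c)*(a'*c') = a*((c*a')*c') := by simp only [mul_assoc]
    _ = a*(c*c') := by rw [show (c*a')*c' = c*c' from E1 hidem h1 h2 h3]
    _ = (a*c)*c' := by rw [mul_assoc]
    _ = a*c' := E1 hidem h4 h3 h5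

end core

open scoped Classical

/-- image of an internally-multiplicative 6-tuple -/
lemma six_table (g : Fin 6 → S) (hinj : Function.Injective g)
    (h : ∀ i j, ∃ k, g i * g j = g k) :
    ∃ T : Finset S, T.card = 6 ∧ ∀ x ∈ T, ∀ y ∈ T, x * y ∈ T := by
  refine ⟨Finset.univ.image g, ?_, ?_⟩
  · rw [Finset.card_image_of_injective _ hinj, Finset.card_univ, Fintype.card_fin]
  · intro x hx y hy
    simp only [Finset.mem_image, Finset.mem_univ, true_and] at hx hy ⊢
    obtain ⟨i, rfl⟩ := hx; obtain ⟨j, rfl⟩ := hy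
    obtain ⟨k, hk⟩ := h i j
    exact ⟨k, hk.symm⟩

lemma grid (hidem : ∀ x : S, x * x = x) {m n : ℕ} (hmn : m * n = 6)
    (R : Fin m → S) (C : Fin n → S)
    (hJRC : ∀ i j, Jr (R i) (C j))
    (hJRR : ∀ i i', Jr (R i) (R i'))
    (hJCC : ∀ j j', Jr (C j) (C j'))
    (hRdist : ∀ i i', i ≠ i' → ¬ Rr (R i) (R i'))
    (hCdist : ∀ j j', j ≠ j' → ¬ Lr (C j) (C j')) :
    ∃ T : Finset S, T.card = 6 ∧ ∀ x ∈ T, ∀ y ∈ T, x * y ∈ T := by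
  set f : Fin m × Fin n → S := fun p => R p.1 * C p.2 with hf
  have hinj : Function.Injective f := by
    rintro ⟨i, j⟩ ⟨i', j'⟩ he
    simp only [hf] at he
    have hRi : Rr (R i) (R i') := by
      have h1 : Rr (R i) (R i * C j) := Rr_mul hidem (hJRC i j)
      have h2 : Rr (R i') (R i' * C j') := Rr_mul hidem (hJRC i' j')
      rw [← he] at h2
      exact Rr_trans hidem h1 (Rr_symm hidem h2)
    have hCj : Lr (C j) (C j') := by
      have h1 : Lr (R i * C j) (C j) := Lr_mul hidem (hJRC i j)
      have h2 : Lr (R i' * C j') (C j') := Lr_mul hidem (hJRC i' j')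
      rw [← he] at h2
      exact Lr_trans hidem (Lr_symm hidem h1) h2
    have hi : i = i' := by by_contra hne; exact hRdist i i' hne hRi
    have hj : j = j' := by by_contra hne; exact hCdist j j' hne hCj
    simp [hi, hj]
  refine ⟨Finset.univ.image f, ?_, ?_⟩
  · rw [Finset.card_image_of_injective _ hinj, Finset.card_univ, Fintype.card_prod,
      Fintype.card_fin, Fintype.card_fin, hmn]
  · intro x hx y hy
    simp only [Finset.mem_image, Finset.mem_univ, true_and] at hx hy ⊢
    obtain ⟨⟨i, j⟩, rfl⟩ := hx; obtain ⟨⟨i', j'⟩, rfl⟩ := hy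
    refine ⟨(i, j'), ?_⟩
    show R i * C j' = f (i,j) * f (i', j')
    rw [show f (i,j) * f (i',j') = R i * C j' from
      rect_mul hidem (Jr_symm hidem (hJRC i' j)) (hJRC i' j') (hJCC j j')
        (hJRC i j) (hJRC i j')]

/-- a rectangular class is a grid: card = (L-class size) * (R-class size) -/
lemma grid_card (hidem : ∀ x : S, x * x = x) (D : Finset S)
    (hJ : ∀ x ∈ D, ∀ y ∈ D, Jr x y) (hcl : ∀ x ∈ D, ∀ y ∈ D, x*y ∈ D)
    {u : S} (hu : u ∈ D) :
    D.card = (D.filter (fun w => Lr u w)).card * (D.filter (fun w => Rr u w)).card := by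
  rw [← Finset.card_product]
  apply Finset.card_bij' (i := fun w _ => (w*u, u*w))
    (j := fun p _ => p.1 * p.2)
  · intro w hw
    simp only [Finset.mem_product, Finset.mem_filter]
    have h1 : u*w*u = u := (hJ u hu w hw).1
    refine ⟨⟨hcl w hw u hu, ?_, ?_⟩, ⟨hcl u hu w hw, ?_, ?_⟩⟩
    · show u*(w*u) = u; rw [← mul_assoc]; exact h1
    · show (w*u)*u = w*u; rw [mul_assoc]; rw [hidem u]
    · show u*(u*w) = u*w; rw [← mul_assoc, hidem u]
    · show (u*w)*u = u; exact h1
  · rintro ⟨x, y⟩ hp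
    simp only [Finset.mem_product, Finset.mem_filter] at hp
    exact hcl x hp.1.1 y hp.2.1
  · intro w hw
    show (w*u)*(u*w) = w
    calc (w*u)*(u*w) = w*((u*u)*w) := by simp only [mul_assoc]
      _ = w*(u*w) := by rw [hidem u]
      _ = w*u*w := by rw [mul_assoc]
      _ = w := (hJ w hw u hu).1
  · rintro ⟨x, y⟩ hp
    simp only [Finset.mem_product, Finset.mem_filter] at hp
    obtain ⟨⟨hx, hux, hxu⟩, ⟨hy, huy, hyu⟩⟩ := hp
    have e1 : (x*y)*u = x := by rw [mul_assoc, hyu]; exact hxu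
    have e2 : u*(x*y) = y := by rw [← mul_assoc, hux]; exact huy
    simp [e1, e2]

/-- a finite nonempty list has a ple-maximal element -/
lemma exists_max (hidem : ∀ x : S, x * x = x) :
    ∀ (l : List S), l ≠ [] → ∃ m ∈ l, ∀ w ∈ l, ple m w → ple w m := by
  intro l
  induction l with
  | nil => intro h; exact absurd rfl h
  | cons a t ih =>
    intro _
    rcases eq_or_ne t [] with rfl | hne
    · refine ⟨a, List.mem_singleton_self a, ?_⟩
      intro w hw _
      rw [List.mem_singleton] at hw
      rw [hw]
      exact ple_refl hidem a
    · obtain ⟨m', hm'mem, hm'max⟩ := ih hne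
      by_cases hc : ple m' a ∧ ¬ ple a m'
      · refine ⟨a, List.mem_cons_self, ?_⟩
        intro w hw haw
        rcases List.mem_cons.1 hw with rfl | hwt
        · exact haw
        · have h1 : ple m' w := ple_trans hidem hc.1 haw
          have h2 : ple w m' := hm'max w hwt h1
          exact ple_trans hidem h2 hc.1
      · refine ⟨m', List.mem_cons_of_mem a hm'mem, ?_⟩
        intro w hw hmw
        rcases List.mem_cons.1 hw with rfl | hwt
        · push_neg at hc
          exact hc hmw
        · exact hm'max w hwt hmw

/-- product of x::l -/
def sp (x : S) (l : List S) : S := l.foldl (· * ·) x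

/-- product of a list, with junk value for [] -/
def pr (j : S) : List S → S
  | [] => j
  | a :: t => sp a t

lemma sp_mul (l : List S) : ∀ x y : S, sp (x*y) l = x * sp y l := by
  induction l with
  | nil => intro x y; rfl
  | cons a t ih =>
    intro x y
    show sp (x*y*a) t = x * sp (y*a) t
    rw [mul_assoc, ih]

lemma pr_cons (j x : S) {t : List S} (h : t ≠ []) : pr j (x::t) = x * pr j t := by
  obtain ⟨a, t', rfl⟩ := List.exists_cons_of_ne_nil h
  show sp x (a::t') = x * sp a t'
  show sp (x*a) t' = x * sp a t'
  exact sp_mul t' x a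

lemma pr_append (j : S) {l m : List S} (h1 : l ≠ []) (h2 : m ≠ []) :
    pr j (l ++ m) = pr j l * pr j m := by
  obtain ⟨a, t, rfl⟩ := List.exists_cons_of_ne_nil h1
  obtain ⟨b, m', rfl⟩ := List.exists_cons_of_ne_nil h2
  show sp a (t ++ b :: m') = sp a t * sp b m'
  show (t ++ b :: m').foldl (· * ·) a = sp a t * sp b m'
  rw [List.foldl_append]
  show sp (sp a t) (b :: m') = sp a t * sp b m'
  show sp (sp a t * b) m' = sp a t * sp b m'
  exact sp_mul m' (sp a t) b

section lists
variable (hidem : ∀ x : S, x * x = x)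
include hidem

lemma J_perm (j : S) {l m : List S} (hp : l.Perm m) (hne : l ≠ []) :
    Jr (pr j l) (pr j m) := by
  induction hp with
  | nil => exact absurd rfl hne
  | cons x h ih =>
    rename_i l₁ l₂
    rcases eq_or_ne l₁ [] with rfl | h1
    · have : l₂ = [] := h.symm.eq_nil
      subst this
      exact Jr_refl hidem _
    · have h2 : l₂ ≠ [] := fun he => h1 (by rw [he] at h; exact h.eq_nil)
      rw [pr_cons j x h1, pr_cons j x h2]
      exact Jr_mul_right hidem (ih h1) x
  | swap x y t =>
    rcases eq_or_ne t [] with rfl | ht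
    · exact Jr_comm hidem y x
    · have e1 : pr j (y::x::t) = (y*x) * pr j t := by
        rw [pr_cons j y (List.cons_ne_nil x t), pr_cons j x ht, mul_assoc]
      have e2 : pr j (x::y::t) = (x*y) * pr j t := by
        rw [pr_cons j x (List.cons_ne_nil y t), pr_cons j y ht, mul_assoc]
      rw [e1, e2]
      exact Jr_mul_left hidem (Jr_comm hidem y x) (pr j t)
  | trans hab hbc ih1 ih2 =>
    rename_i la lb lc
    have hb : lb ≠ [] := fun he => hne (by rw [he] at hab; exact hab.eq_nil)
    exact Jr_trans hidem (ih1 hne) (ih2 hb)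

lemma ple_pr_mem (j : S) : ∀ {t : List S} {a : S}, a ∈ t → ple (pr j t) a := by
  intro t
  induction t with
  | nil => intro a h; simp at h
  | cons b t' ih =>
    intro a h
    rcases List.mem_cons.1 h with rfl | h'
    · rcases eq_or_ne t' [] with rfl | ht
      · exact ple_refl hidem a
      · rw [pr_cons j a ht]
        exact ple_mul_left hidem a (pr j t')
    · have ht : t' ≠ [] := List.ne_nil_of_mem h'
      rw [pr_cons j b ht]
      exact ple_compat_right hidem (ih h') b

lemma J_dedup (j : S) : ∀ (l : List S), l ≠ [] → Jr (pr j l) (pr j l.dedup) := by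
  intro l
  induction l with
  | nil => intro h; exact absurd rfl h
  | cons a t ih =>
    intro _
    rcases eq_or_ne t [] with rfl | ht
    · simp only [List.dedup_cons_of_notMem List.not_mem_nil]
      exact Jr_refl hidem _
    · by_cases hmem : a ∈ t
      · rw [List.dedup_cons_of_mem hmem, pr_cons j a ht]
        have h1 : Jr (a * pr j t) (pr j t) :=
          ⟨ple_mul_right hidem a (pr j t),
           ple_meet hidem (ple_pr_mem hidem j hmem) (ple_refl hidem (pr j t))⟩
        exact Jr_trans hidem h1 (ih ht)
      · rw [List.dedup_cons_of_notMem hmem, pr_cons j a ht,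
          pr_cons j a (by rw [ne_eq, List.dedup_eq_nil]; exact ht)]
        exact Jr_mul_right hidem (ih ht) a

lemma J_toFinset (j : S) {l m : List S} (h : l.toFinset = m.toFinset)
    (h1 : l ≠ []) (h2 : m ≠ []) : Jr (pr j l) (pr j m) := by
  have hperm : l.dedup.Perm m.dedup :=
    List.perm_of_nodup_nodup_toFinset_eq (List.nodup_dedup l) (List.nodup_dedup m)
      (by ext x; simp only [List.mem_toFinset, List.mem_dedup]; rw [show (x ∈ l ↔ x ∈ m) from by rw [← List.mem_toFinset, ← List.mem_toFinset, h]])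
  have hd1 : l.dedup ≠ [] := by rw [ne_eq, List.dedup_eq_nil]; exact h1
  exact Jr_trans hidem (J_dedup hidem j l h1)
    (Jr_trans hidem (J_perm hidem j hperm hd1) (Jr_symm hidem (J_dedup hidem j m h2)))

end lists
section special
variable (hidem : ∀ x : S, x * x = x)
include hidem

set_option maxHeartbeats 1000000 in
lemma special
    (W : Finset S)
    (hclosed : ∀ x ∈ W, ∀ y ∈ W, x*y ∈ W)
    (hsat : ∀ a ∈ W, ∀ b : S, Jr a b → b ∈ W)
    (m : S) (hm : m ∈ W)
    (hmax : ∀ w ∈ W, ple m w → ple w m)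
    (hD4 : (W.filter (fun w => Jr m w)).card = 4)
    (hW3 : (W.filter (fun w => ¬ Jr m w)).card = 3)
    (hrowL : ∀ u ∈ W.filter (fun w => Jr m w),
      ((W.filter (fun w => Jr m w)).filter (fun w => Lr u w)).card ≤ 2)
    (hrowR : ∀ u ∈ W.filter (fun w => Jr m w),
      ((W.filter (fun w => Jr m w)).filter (fun w => Rr u w)).card ≤ 2) :
    ∃ T : Finset S, T.card = 6 ∧ ∀ x ∈ T, ∀ y ∈ T, x*y ∈ T := by
  classical
  set Δ := W.filter (fun w => Jr m w) with hΔdef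
  set W' := W.filter (fun w => ¬ Jr m w) with hW'def
  have hmemΔ : ∀ {x}, x ∈ Δ → x ∈ W ∧ Jr m x := fun h => Finset.mem_filter.1 h
  have hmemW' : ∀ {v}, v ∈ W' → v ∈ W ∧ ¬ Jr m v := fun h => Finset.mem_filter.1 h
  have hΔJ : ∀ x ∈ Δ, ∀ y ∈ Δ, Jr x y := fun x hx y hy =>
    Jr_trans hidem (Jr_symm hidem (hmemΔ hx).2) (hmemΔ hy).2
  have hΔcl : ∀ x ∈ Δ, ∀ y ∈ Δ, x*y ∈ Δ := by
    intro x hx y hy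
    refine Finset.mem_filter.2 ⟨hclosed x (hmemΔ hx).1 y (hmemΔ hy).1, ?_⟩
    exact Jr_trans hidem (hmemΔ hx).2 (Jr_absorb hidem (hΔJ x hx y hy))
  have hmΔ : m ∈ Δ := Finset.mem_filter.2 ⟨hm, Jr_refl hidem m⟩
  have hdropJ : ∀ u ∈ W, ∀ v ∈ W', ¬ Jr m (u*v) ∧ ¬ Jr m (v*u) := by
    intro u hu v hv
    constructor
    · intro hJ
      have h1 : ple m v := ple_trans hidem hJ.1 (ple_mul_right hidem u v)
      exact (hmemW' hv).2 ⟨h1, hmax v (hmemW' hv).1 h1⟩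
    · intro hJ
      have h1 : ple m v := ple_trans hidem hJ.1 (ple_mul_left hidem v u)
      exact (hmemW' hv).2 ⟨h1, hmax v (hmemW' hv).1 h1⟩
  have hcross : ∀ x ∈ W, ∀ v ∈ W', x*v ∈ W' ∧ v*x ∈ W' := by
    intro x hx v hv
    constructor
    · exact Finset.mem_filter.2 ⟨hclosed x hx v (hmemW' hv).1, (hdropJ x hx v hv).1⟩
    · exact Finset.mem_filter.2 ⟨hclosed v (hmemW' hv).1 x hx, (hdropJ x hx v hv).2⟩
  have hW'sat : ∀ v ∈ W', ∀ b : S, Jr v b → b ∈ W' := by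
    intro v hv b hJ
    refine Finset.mem_filter.2 ⟨hsat v (hmemW' hv).1 b hJ, ?_⟩
    intro hmb
    exact (hmemW' hv).2 (Jr_trans hidem hmb (Jr_symm hidem hJ))
  obtain ⟨p, q, r, hpq, hpr, hqr, hW'eq⟩ := Finset.card_eq_three.1 hW3
  have hpW' : p ∈ W' := by rw [hW'eq]; simp
  have hqW' : q ∈ W' := by rw [hW'eq]; simp
  have hrW' : r ∈ W' := by rw [hW'eq]; simp
  have hmemW'3 : ∀ {v}, v ∈ W' → v = p ∨ v = q ∨ v = r := by
    intro v hv; rw [hW'eq] at hv; simpa using hv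
  -- it suffices to find a good 2-element set V in W'
  suffices hV : ∃ V : Finset S, V.card = 2 ∧ V ⊆ W' ∧ (∀ a ∈ V, ∀ b ∈ V, a*b ∈ V) ∧
      (∀ x ∈ Δ, ∀ v ∈ V, x*v ∈ V ∧ v*x ∈ V) by
    obtain ⟨V, hV2, hVsub, hVcl, hVabs⟩ := hV
    have hdisj : Disjoint Δ V := by
      refine Finset.disjoint_left.2 ?_
      intro a haΔ haV
      exact (hmemW' (hVsub haV)).2 (hmemΔ haΔ).2
    refine ⟨Δ ∪ V, ?_, ?_⟩
    · rw [Finset.card_union_of_disjoint hdisj, hD4, hV2]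
    · intro x hx y hy
      rcases Finset.mem_union.1 hx with hx | hx <;> rcases Finset.mem_union.1 hy with hy | hy
      · exact Finset.mem_union_left _ (hΔcl x hx y hy)
      · exact Finset.mem_union_right _ ((hVabs x hx y hy).1)
      · exact Finset.mem_union_right _ ((hVabs y hy x hx).2)
      · exact Finset.mem_union_right _ (hVcl x hx y hy)
  by_cases hI : Jr p q ∧ Jr p r
  · -- CASE I : W' is a single class
    have hJqr : Jr q r := Jr_trans hidem (Jr_symm hidem hI.1) hI.2
    have hJW' : ∀ v ∈ W', ∀ w ∈ W', Jr v w := by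
      intro v hv w hw
      rcases hmemW'3 hv with rfl|rfl|rfl <;> rcases hmemW'3 hw with rfl|rfl|rfl
      · exact Jr_refl hidem _
      · exact hI.1
      · exact hI.2
      · exact Jr_symm hidem hI.1
      · exact Jr_refl hidem _
      · exact hJqr
      · exact Jr_symm hidem hI.2
      · exact Jr_symm hidem hJqr
      · exact Jr_refl hidem _
    have hW'cl : ∀ v ∈ W', ∀ w ∈ W', v*w ∈ W' := fun v hv w hw =>
      (hcross v (hmemW' hv).1 w hw).1
    -- the class W' of size 3 is left-zero or right-zero
    have hgc := grid_card hidem W' hJW' hW'cl hpW'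
    rw [hW3] at hgc
    have haL : (W'.filter (fun w => Lr p w)).card ≤ 3 := by
      calc (W'.filter (fun w => Lr p w)).card ≤ W'.card := Finset.card_filter_le _ _
        _ = 3 := hW3
    have haR : (W'.filter (fun w => Rr p w)).card ≤ 3 := by
      calc (W'.filter (fun w => Rr p w)).card ≤ W'.card := Finset.card_filter_le _ _
        _ = 3 := hW3
    have hcase : (W'.filter (fun w => Lr p w)).card = 3 ∨
        (W'.filter (fun w => Rr p w)).card = 3 := by
      set a := (W'.filter (fun w => Lr p w)).card with hadef
      set b := (W'.filter (fun w => Rr p w)).card with hbdef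
      interval_cases a <;> omega
    -- facts common to both subcases
    have hple : ∀ v ∈ W', ∀ x ∈ Δ, v*x*v = v := by
      intro v hv x hx
      have h1 : v*x ∈ W' := (hcross x (hmemΔ hx).1 v hv).2
      have h2 := (hJW' v hv (v*x) h1).1
      calc v*x*v = v*(v*x)*v := by rw [show v*(v*x) = v*x from by rw [← mul_assoc, hidem v]]
        _ = v := h2
    rcases hcase with hfull | hfull
    · -- LEFT-zero : all of W' is one L-class
      have hfeq : W'.filter (fun w => Lr p w) = W' :=
        Finset.eq_of_subset_of_card_le (Finset.filter_subset _ _) (by omega)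
      have hallL : ∀ v ∈ W', ∀ w ∈ W', Lr v w := by
        intro v hv w hw
        have h1 : Lr p v := (Finset.mem_filter.1 (by rw [hfeq]; exact hv)).2
        have h2 : Lr p w := (Finset.mem_filter.1 (by rw [hfeq]; exact hw)).2
        exact Lr_trans hidem (Lr_symm hidem h1) h2
      -- right action of Δ on W' is trivial
      have hract : ∀ x ∈ Δ, ∀ v ∈ W', v*x = v := by
        intro x hx v hv
        have h1 : v*x ∈ W' := (hcross x (hmemΔ hx).1 v hv).2
        have hR : Rr (v*x) v := ⟨hple v hv x hx, by rw [← mul_assoc, hidem v]⟩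
        have hL : Lr (v*x) v := hallL (v*x) h1 v hv
        exact RL_eq hidem hR hL
      have hcolbound : ∀ x ∈ Δ, (Δ.filter (fun w => Lr x w)).card = 2 := by
        intro x hx
        have hg := grid_card hidem Δ hΔJ hΔcl hx
        rw [hD4] at hg
        have h1 := hrowL x hx
        have h2 := hrowR x hx
        set a := (Δ.filter (fun w => Lr x w)).card with hadef
        set b := (Δ.filter (fun w => Rr x w)).card with hbdef
        interval_cases a <;> omega
      by_cases hbig : ∃ v ∈ W', ∃ x ∈ Δ,
          2 ≤ ((Δ.filter (fun w => Lr x w)).image (fun y => y * v)).card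
      · obtain ⟨v, hv, x, hx, hO⟩ := hbig
        set O := (Δ.filter (fun w => Lr x w)).image (fun y => y * v) with hOdef
        have hOsub : O ⊆ W' := by
          intro o ho
          obtain ⟨y, hy, rfl⟩ := Finset.mem_image.1 ho
          exact (hcross y (hmemΔ (Finset.mem_filter.1 hy).1).1 v hv).1
        have h5 : O.card ≤ (Δ.filter (fun w => Lr x w)).card := by
          rw [hOdef]; exact Finset.card_image_le
        have hO2 : O.card = 2 := by rw [hcolbound x hx] at h5; omega
        refine ⟨O, hO2, hOsub, ?_, ?_⟩
        · intro a ha b hb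
          rw [(hallL a (hOsub ha) b (hOsub hb)).1]; exact ha
        · intro x' hx' o ho
          obtain ⟨y, hy, rfl⟩ := Finset.mem_image.1 ho
          constructor
          · rw [← mul_assoc]
            refine Finset.mem_image.2 ⟨x'*y, ?_, rfl⟩
            refine Finset.mem_filter.2 ⟨hΔcl x' hx' y (Finset.mem_filter.1 hy).1, ?_⟩
            have h1 : Lr (x'*y) y := Lr_mul hidem (hΔJ x' hx' y (Finset.mem_filter.1 hy).1)
            exact Lr_trans hidem (Finset.mem_filter.1 hy).2 (Lr_symm hidem h1)
          · rw [hract x' hx' _ (hOsub ho)]; exact ho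
      · push_neg at hbig
        have horb : ∀ v ∈ W', ∀ x ∈ Δ, ∀ y ∈ Δ, Lr x y → y*v = x*v := by
          intro v hv x hx y hy hLxy
          have h1 : y*v ∈ (Δ.filter (fun w => Lr x w)).image (fun y => y * v) :=
            Finset.mem_image.2 ⟨y, Finset.mem_filter.2 ⟨hy, hLxy⟩, rfl⟩
          have h2 : x*v ∈ (Δ.filter (fun w => Lr x w)).image (fun y => y * v) :=
            Finset.mem_image.2 ⟨x, Finset.mem_filter.2 ⟨hx, Lr_refl hidem x⟩, rfl⟩
          have h3 := hbig v hv x hx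
          exact Finset.card_le_one.1 (by omega) _ h1 _ h2
        have hfix : ∀ v ∈ W', ∀ x ∈ Δ, ∀ x' ∈ Δ, x'*(x*v) = x*v := by
          intro v hv x hx x' hx'
          rw [← mul_assoc]
          have h1 : x'*x ∈ Δ := hΔcl x' hx' x hx
          have h2 : Lr (x'*x) x := Lr_mul hidem (hΔJ x' hx' x hx)
          have h3 : Lr x (x'*x) := Lr_symm hidem h2
          exact horb v hv x hx (x'*x) h1 (Lr_symm hidem h2)
        by_cases hneq : ∃ v ∈ W', ∃ x ∈ Δ, ∃ v' ∈ W', ∃ x' ∈ Δ, x*v ≠ x'*v'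
        · obtain ⟨v, hv, x, hx, v', hv', x', hx', hne⟩ := hneq
          refine ⟨{x*v, x'*v'}, ?_, ?_, ?_, ?_⟩
          · rw [Finset.card_insert_of_notMem (by simp [hne]), Finset.card_singleton]
          · intro a ha
            rcases Finset.mem_insert.1 ha with rfl | ha
            · exact (hcross x (hmemΔ hx).1 v hv).1
            · rw [Finset.mem_singleton.1 ha]
              exact (hcross x' (hmemΔ hx').1 v' hv').1
          · intro a ha b hb
            have haW : a ∈ W' := by
              rcases Finset.mem_insert.1 ha with rfl | ha
              · exact (hcross x (hmemΔ hx).1 v hv).1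
              · rw [Finset.mem_singleton.1 ha]; exact (hcross x' (hmemΔ hx').1 v' hv').1
            have hbW : b ∈ W' := by
              rcases Finset.mem_insert.1 hb with rfl | hb
              · exact (hcross x (hmemΔ hx).1 v hv).1
              · rw [Finset.mem_singleton.1 hb]; exact (hcross x' (hmemΔ hx').1 v' hv').1
            rw [(hallL a haW b hbW).1]; exact ha
          · intro z hz o ho
            have hoW : o ∈ W' := by
              rcases Finset.mem_insert.1 ho with rfl | ho
              · exact (hcross x (hmemΔ hx).1 v hv).1
              · rw [Finset.mem_singleton.1 ho]; exact (hcross x' (hmemΔ hx').1 v' hv').1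
            constructor
            · rcases Finset.mem_insert.1 ho with rfl | ho
              · rw [hfix v hv x hx z hz]; simp
              · rw [Finset.mem_singleton.1 ho, hfix v' hv' x' hx' z hz]; simp
            · rw [hract z hz o hoW]; exact ho
        · push_neg at hneq
          set t := m*p with htdef
          have htW' : t ∈ W' := (hcross m hm p hpW').1
          have hprod : ∀ v ∈ W', ∀ x ∈ Δ, x*v = t := fun v hv x hx =>
            hneq v hv x hx p hpW' m hmΔ
          obtain ⟨w, hw, hwt⟩ : ∃ w ∈ W', w ≠ t := by
            by_cases h1 : p = t
            · by_cases h2 : q = t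
              · exact ⟨r, hrW', by rw [← h1]; exact (Ne.symm hpr)⟩
              · exact ⟨q, hqW', h2⟩
            · exact ⟨p, hpW', h1⟩
          refine ⟨{t, w}, ?_, ?_, ?_, ?_⟩
          · rw [Finset.card_insert_of_notMem (by simp [Ne.symm hwt]), Finset.card_singleton]
          · intro a ha
            rcases Finset.mem_insert.1 ha with rfl | ha
            · exact htW'
            · rw [Finset.mem_singleton.1 ha]; exact hw
          · intro a ha b hb
            have haW : a ∈ W' := by
              rcases Finset.mem_insert.1 ha with rfl | ha
              · exact htW'
              · rw [Finset.mem_singleton.1 ha]; exact hw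
            have hbW : b ∈ W' := by
              rcases Finset.mem_insert.1 hb with rfl | hb
              · exact htW'
              · rw [Finset.mem_singleton.1 hb]; exact hw
            rw [(hallL a haW b hbW).1]; exact ha
          · intro z hz o ho
            have hoW : o ∈ W' := by
              rcases Finset.mem_insert.1 ho with rfl | ho
              · exact htW'
              · rw [Finset.mem_singleton.1 ho]; exact hw
            constructor
            · rw [hprod o hoW z hz]; simp
            · rw [hract z hz o hoW]; exact ho
    · -- RIGHT-zero : all of W' is one R-class
      have hfeq : W'.filter (fun w => Rr p w) = W' :=
        Finset.eq_of_subset_of_card_le (Finset.filter_subset _ _) (by omega)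
      have hallR : ∀ v ∈ W', ∀ w ∈ W', Rr v w := by
        intro v hv w hw
        have h1 : Rr p v := (Finset.mem_filter.1 (by rw [hfeq]; exact hv)).2
        have h2 : Rr p w := (Finset.mem_filter.1 (by rw [hfeq]; exact hw)).2
        exact Rr_trans hidem (Rr_symm hidem h1) h2
      have hlact : ∀ x ∈ Δ, ∀ v ∈ W', x*v = v := by
        intro x hx v hv
        have h1 : x*v ∈ W' := (hcross x (hmemΔ hx).1 v hv).1
        have hL : Lr (x*v) v := ⟨by rw [mul_assoc, hidem v], by
          rw [← mul_assoc]; exact hple v hv x hx⟩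
        have hR : Rr (x*v) v := hallR (x*v) h1 v hv
        exact RL_eq hidem hR hL
      have hrowbound : ∀ x ∈ Δ, (Δ.filter (fun w => Rr x w)).card = 2 := by
        intro x hx
        have hg := grid_card hidem Δ hΔJ hΔcl hx
        rw [hD4] at hg
        have h1 := hrowL x hx
        have h2 := hrowR x hx
        set a := (Δ.filter (fun w => Lr x w)).card with hadef
        set b := (Δ.filter (fun w => Rr x w)).card with hbdef
        interval_cases a <;> omega
      by_cases hbig : ∃ v ∈ W', ∃ x ∈ Δ,
          2 ≤ ((Δ.filter (fun w => Rr x w)).image (fun y => v * y)).card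
      · obtain ⟨v, hv, x, hx, hO⟩ := hbig
        set O := (Δ.filter (fun w => Rr x w)).image (fun y => v * y) with hOdef
        have hOsub : O ⊆ W' := by
          intro o ho
          obtain ⟨y, hy, rfl⟩ := Finset.mem_image.1 ho
          exact (hcross y (hmemΔ (Finset.mem_filter.1 hy).1).1 v hv).2
        have h5 : O.card ≤ (Δ.filter (fun w => Rr x w)).card := by
          rw [hOdef]; exact Finset.card_image_le
        have hO2 : O.card = 2 := by rw [hrowbound x hx] at h5; omega
        refine ⟨O, hO2, hOsub, ?_, ?_⟩
        · intro a ha b hb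
          rw [(hallR a (hOsub ha) b (hOsub hb)).1]; exact hb
        · intro x' hx' o ho
          obtain ⟨y, hy, rfl⟩ := Finset.mem_image.1 ho
          constructor
          · rw [hlact x' hx' _ (hOsub ho)]; exact ho
          · rw [mul_assoc]
            refine Finset.mem_image.2 ⟨y*x', ?_, rfl⟩
            refine Finset.mem_filter.2 ⟨hΔcl y (Finset.mem_filter.1 hy).1 x' hx', ?_⟩
            have h1 : Rr y (y*x') := Rr_mul hidem (hΔJ y (Finset.mem_filter.1 hy).1 x' hx')
            exact Rr_trans hidem (Finset.mem_filter.1 hy).2 h1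
      · push_neg at hbig
        have horb : ∀ v ∈ W', ∀ x ∈ Δ, ∀ y ∈ Δ, Rr x y → v*y = v*x := by
          intro v hv x hx y hy hRxy
          have h1 : v*y ∈ (Δ.filter (fun w => Rr x w)).image (fun y => v * y) :=
            Finset.mem_image.2 ⟨y, Finset.mem_filter.2 ⟨hy, hRxy⟩, rfl⟩
          have h2 : v*x ∈ (Δ.filter (fun w => Rr x w)).image (fun y => v * y) :=
            Finset.mem_image.2 ⟨x, Finset.mem_filter.2 ⟨hx, Rr_refl hidem x⟩, rfl⟩
          have h3 := hbig v hv x hx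
          exact Finset.card_le_one.1 (by omega) _ h1 _ h2
        have hfix : ∀ v ∈ W', ∀ x ∈ Δ, ∀ x' ∈ Δ, (v*x)*x' = v*x := by
          intro v hv x hx x' hx'
          rw [mul_assoc]
          have h1 : x*x' ∈ Δ := hΔcl x hx x' hx'
          have h2 : Rr x (x*x') := Rr_mul hidem (hΔJ x hx x' hx')
          exact horb v hv x hx (x*x') h1 h2
        by_cases hneq : ∃ v ∈ W', ∃ x ∈ Δ, ∃ v' ∈ W', ∃ x' ∈ Δ, v*x ≠ v'*x'
        · obtain ⟨v, hv, x, hx, v', hv', x', hx', hne⟩ := hneq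
          refine ⟨{v*x, v'*x'}, ?_, ?_, ?_, ?_⟩
          · rw [Finset.card_insert_of_notMem (by simp [hne]), Finset.card_singleton]
          · intro a ha
            rcases Finset.mem_insert.1 ha with rfl | ha
            · exact (hcross x (hmemΔ hx).1 v hv).2
            · rw [Finset.mem_singleton.1 ha]
              exact (hcross x' (hmemΔ hx').1 v' hv').2
          · intro a ha b hb
            have hbW : b ∈ W' := by
              rcases Finset.mem_insert.1 hb with rfl | hb
              · exact (hcross x (hmemΔ hx).1 v hv).2
              · rw [Finset.mem_singleton.1 hb]; exact (hcross x' (hmemΔ hx').1 v' hv').2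
            have haW : a ∈ W' := by
              rcases Finset.mem_insert.1 ha with rfl | ha
              · exact (hcross x (hmemΔ hx).1 v hv).2
              · rw [Finset.mem_singleton.1 ha]; exact (hcross x' (hmemΔ hx').1 v' hv').2
            rw [(hallR a haW b hbW).1]; exact hb
          · intro z hz o ho
            have hoW : o ∈ W' := by
              rcases Finset.mem_insert.1 ho with rfl | ho
              · exact (hcross x (hmemΔ hx).1 v hv).2
              · rw [Finset.mem_singleton.1 ho]; exact (hcross x' (hmemΔ hx').1 v' hv').2
            constructor
            · rw [hlact z hz o hoW]; exact ho
            · rcases Finset.mem_insert.1 ho with rfl | ho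
              · rw [hfix v hv x hx z hz]; simp
              · rw [Finset.mem_singleton.1 ho, hfix v' hv' x' hx' z hz]; simp
        · push_neg at hneq
          set t := p*m with htdef
          have htW' : t ∈ W' := (hcross m hm p hpW').2
          have hprod : ∀ v ∈ W', ∀ x ∈ Δ, v*x = t := fun v hv x hx =>
            hneq v hv x hx p hpW' m hmΔ
          obtain ⟨w, hw, hwt⟩ : ∃ w ∈ W', w ≠ t := by
            by_cases h1 : p = t
            · by_cases h2 : q = t
              · exact ⟨r, hrW', by rw [← h1]; exact (Ne.symm hpr)⟩
              · exact ⟨q, hqW', h2⟩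
            · exact ⟨p, hpW', h1⟩
          refine ⟨{t, w}, ?_, ?_, ?_, ?_⟩
          · rw [Finset.card_insert_of_notMem (by simp [Ne.symm hwt]), Finset.card_singleton]
          · intro a ha
            rcases Finset.mem_insert.1 ha with rfl | ha
            · exact htW'
            · rw [Finset.mem_singleton.1 ha]; exact hw
          · intro a ha b hb
            have haW : a ∈ W' := by
              rcases Finset.mem_insert.1 ha with rfl | ha
              · exact htW'
              · rw [Finset.mem_singleton.1 ha]; exact hw
            have hbW : b ∈ W' := by
              rcases Finset.mem_insert.1 hb with rfl | hb
              · exact htW'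
              · rw [Finset.mem_singleton.1 hb]; exact hw
            rw [(hallR a haW b hbW).1]; exact hb
          · intro z hz o ho
            have hoW : o ∈ W' := by
              rcases Finset.mem_insert.1 ho with rfl | ho
              · exact htW'
              · rw [Finset.mem_singleton.1 ho]; exact hw
            constructor
            · rw [hlact z hz o hoW]; exact ho
            · rw [hprod o hoW z hz]; simp
  · -- CASE II : W' splits into several classes
    have hW'cl : ∀ v ∈ W', ∀ w ∈ W', v*w ∈ W' := fun v hv w hw =>
      (hcross v (hmemW' hv).1 w hw).1
    have card2 : ∀ a b : S, a ≠ b → ({a, b} : Finset S).card = 2 := by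
      intro a b h
      rw [Finset.card_insert_of_notMem (by simp [h]), Finset.card_singleton]
    have sub2 : ∀ a b : S, a ∈ W' → b ∈ W' → ({a, b} : Finset S) ⊆ W' := by
      intro a b ha hb c hc
      rcases Finset.mem_insert.1 hc with rfl | hc
      · exact ha
      · rw [Finset.mem_singleton.1 hc]; exact hb
    have mem2 : ∀ {c a b : S}, c ∈ ({a, b} : Finset S) → c = a ∨ c = b := by
      intro c a b hc; simpa using hc
    have patone : ∀ u1 u2 s : S, u1 ∈ W' → u2 ∈ W' → s ∈ W' →
        u1 ≠ u2 → Jr u1 u2 → ¬ Jr u1 s → ¬ Jr u2 s →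
        (∀ v ∈ W', v = u1 ∨ v = u2 ∨ v = s) →
        ∃ V : Finset S, V.card = 2 ∧ V ⊆ W' ∧ (∀ a ∈ V, ∀ b ∈ V, a*b ∈ V) ∧
          (∀ x ∈ Δ, ∀ v ∈ V, x*v ∈ V ∧ v*x ∈ V) := by
      intro u1 u2 s hu1 hu2 hs hne12 hJ12 hn1 hn2 hmem3
      have hC2 : ∀ b ∈ W', Jr u1 b → (b = u1 ∨ b = u2) := by
        intro b hb hJ
        rcases hmem3 b hb with rfl|rfl|rfl
        · exact Or.inl rfl
        · exact Or.inr rfl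
        · exact absurd hJ hn1
      have hJu : ∀ {v : S}, (v = u1 ∨ v = u2) → Jr u1 v := by
        rintro v (rfl|rfl)
        · exact Jr_refl hidem _
        · exact hJ12
      have hpairmul : ∀ a b : S, (a = u1 ∨ a = u2) → (b = u1 ∨ b = u2) →
          (a*b = u1 ∨ a*b = u2) := by
        intro a b ha hb
        have hJa := hJu ha
        have hJb := hJu hb
        have haW : a ∈ W' := by rcases ha with rfl|rfl <;> assumption
        have hbW : b ∈ W' := by rcases hb with rfl|rfl <;> assumption
        have : Jr u1 (a*b) := Jr_trans hidem hJa
          (Jr_absorb hidem (Jr_trans hidem (Jr_symm hidem hJa) hJb))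
        exact hC2 _ (hW'cl a haW b hbW) this
      have hJcross : ∀ x ∈ Δ, ∀ {v : S}, (v = u1 ∨ v = u2) →
          Jr (x*v) (m*u1) ∧ Jr (v*x) (m*u1) := by
        intro x hx v hv
        have hxm : Jr x m := Jr_symm hidem (hmemΔ hx).2
        have h1 : Jr (x*v) (m*v) := Jr_mul_left hidem hxm v
        have h2 : Jr (m*v) (m*u1) := Jr_mul_right hidem (Jr_symm hidem (hJu hv)) m
        have h3 : Jr (x*v) (m*u1) := Jr_trans hidem h1 h2
        exact ⟨h3, Jr_trans hidem (Jr_comm hidem v x) h3⟩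
      have hmemvW : ∀ {v : S}, (v = u1 ∨ v = u2) → v ∈ W' := by
        rintro v (rfl|rfl) <;> assumption
      by_cases hps : ple s u1
      · -- s is below the pair class
        have hsbot : ∀ c ∈ W', ple c s → c = s := by
          intro c hc hcs
          rcases hmem3 c hc with rfl|rfl|rfl
          · exact absurd (Jr_symm hidem ⟨hps, hcs⟩) hn1
          · exact absurd (Jr_symm hidem ⟨ple_trans hidem hps hJ12.1, hcs⟩) hn2
          · rfl
        have hxs : ∀ x ∈ Δ, x*s = s ∧ s*x = s := by
          intro x hx
          constructor
          · exact hsbot (x*s) (hcross x (hmemΔ hx).1 s hs).1 (ple_mul_right hidem x s)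
          · exact hsbot (s*x) (hcross x (hmemΔ hx).1 s hs).2 (ple_mul_left hidem s x)
        by_cases hC : Jr (m*u1) u1
        · refine ⟨{u1, u2}, card2 _ _ hne12, sub2 _ _ hu1 hu2, ?_, ?_⟩
          · intro a ha b hb
            rcases hpairmul a b (mem2 ha) (mem2 hb) with h|h <;> rw [h] <;> simp
          · intro x hx v hv
            have hv2 := mem2 hv
            have h1 : Jr u1 (x*v) :=
              Jr_symm hidem (Jr_trans hidem (hJcross x hx hv2).1 hC)
            have h2 : Jr u1 (v*x) :=
              Jr_symm hidem (Jr_trans hidem (hJcross x hx hv2).2 hC)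
            constructor
            · rcases hC2 _ (hcross x (hmemΔ hx).1 v (hmemvW hv2)).1 h1 with h|h <;>
                rw [h] <;> simp
            · rcases hC2 _ (hcross x (hmemΔ hx).1 v (hmemvW hv2)).2 h2 with h|h <;>
                rw [h] <;> simp
        · -- all cross products are s
          have hmu1 : m*u1 = s := by
            have hmem := (hcross m hm u1 hu1).1
            rcases hmem3 _ hmem with h|h|h
            · exact absurd (by rw [h]; exact Jr_refl hidem u1) hC
            · exact absurd (by rw [h]; exact Jr_symm hidem hJ12) hC
            · exact h
          have hcrossval : ∀ x ∈ Δ, ∀ {v : S}, (v = u1 ∨ v = u2) →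
              x*v = s ∧ v*x = s := by
            intro x hx v hv
            have h1 : Jr (x*v) s := hmu1 ▸ (hJcross x hx hv).1
            have h2 : Jr (v*x) s := hmu1 ▸ (hJcross x hx hv).2
            constructor
            · rcases hmem3 _ (hcross x (hmemΔ hx).1 v (hmemvW hv)).1 with h|h|h
              · exact absurd (h ▸ h1) hn1
              · exact absurd (h ▸ h1) hn2
              · exact h
            · rcases hmem3 _ (hcross x (hmemΔ hx).1 v (hmemvW hv)).2 with h|h|h
              · exact absurd (h ▸ h2) hn1
              · exact absurd (h ▸ h2) hn2
              · exact h
          have hne1s : u1 ≠ s := fun h => hn1 (h ▸ Jr_refl hidem u1)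
          refine ⟨{u1, s}, card2 _ _ hne1s, sub2 _ _ hu1 hs, ?_, ?_⟩
          · intro a ha b hb
            rcases mem2 ha with h|h <;> rcases mem2 hb with h'|h' <;> rw [h, h']
            · rw [hidem]; simp
            · rw [hsbot (u1*s) (hW'cl u1 hu1 s hs) (ple_mul_right hidem u1 s)]; simp
            · rw [hsbot (s*u1) (hW'cl s hs u1 hu1) (ple_mul_left hidem s u1)]; simp
            · rw [hidem]; simp
          · intro x hx v hv
            rcases mem2 hv with h|h <;> rw [h]
            · rw [(hcrossval x hx (Or.inl rfl)).1, (hcrossval x hx (Or.inl rfl)).2]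
              simp
            · rw [(hxs x hx).1, (hxs x hx).2]; simp
      · -- the pair class is at the bottom
        have hsu : s*u1 ∈ W' := hW'cl s hs u1 hu1
        have hsune : s*u1 ≠ s := by
          intro h
          apply hps
          show s*u1*s = s
          rw [h]; exact hidem s
        have hsuC : Jr u1 (s*u1) := by
          rcases hmem3 _ hsu with h|h|h
          · rw [h]; exact Jr_refl hidem _
          · rw [h]; exact hJ12
          · exact absurd h hsune
        have hplev : ∀ {v : S}, (v = u1 ∨ v = u2) → ple v u1 := by
          rintro v (rfl|rfl)
          · exact ple_refl hidem _
          · exact hJ12.2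
        refine ⟨{u1, u2}, card2 _ _ hne12, sub2 _ _ hu1 hu2, ?_, ?_⟩
        · intro a ha b hb
          rcases hpairmul a b (mem2 ha) (mem2 hb) with h|h <;> rw [h] <;> simp
        · intro x hx v hv
          have hv2 := mem2 hv
          constructor
          · rcases hmem3 _ (hcross x (hmemΔ hx).1 v (hmemvW hv2)).1 with h|h|h
            · rw [h]; simp
            · rw [h]; simp
            · exfalso
              apply hps
              have h1 : ple s v := h ▸ ple_mul_right hidem x v
              exact ple_trans hidem h1 (hplev hv2)
          · rcases hmem3 _ (hcross x (hmemΔ hx).1 v (hmemvW hv2)).2 with h|h|h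
            · rw [h]; simp
            · rw [h]; simp
            · exfalso
              apply hps
              have h1 : ple s v := h ▸ ple_mul_left hidem v x
              exact ple_trans hidem h1 (hplev hv2)
    -- dispatch to patone / patzero
    by_cases h1 : Jr p q
    · have hn1 : ¬ Jr p r := fun h => hI ⟨h1, h⟩
      have hn2 : ¬ Jr q r := fun h => hI ⟨h1, Jr_trans hidem h1 h⟩
      exact patone p q r hpW' hqW' hrW' hpq h1 hn1 hn2 (fun v hv => hmemW'3 hv)
    by_cases h2 : Jr p r
    · have hn2 : ¬ Jr r q := fun h => h1 (Jr_trans hidem h2 h)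
      have hmem3' : ∀ v ∈ W', v = p ∨ v = r ∨ v = q := by
        intro v hv
        rcases hmemW'3 hv with h|h|h
        · exact Or.inl h
        · exact Or.inr (Or.inr h)
        · exact Or.inr (Or.inl h)
      exact patone p r q hpW' hrW' hqW' hpr h2 h1 hn2 hmem3'
    by_cases h3 : Jr q r
    · have hn1 : ¬ Jr q p := fun h => h1 (Jr_symm hidem h)
      have hn2 : ¬ Jr r p := fun h => h2 (Jr_symm hidem h)
      have hmem3' : ∀ v ∈ W', v = q ∨ v = r ∨ v = p := by
        intro v hv
        rcases hmemW'3 hv with h|h|h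
        · exact Or.inr (Or.inr h)
        · exact Or.inl h
        · exact Or.inr (Or.inl h)
      exact patone q r p hqW' hrW' hpW' hqr h3 hn1 hn2 hmem3'
    · -- patzero : three singleton classes
      have hsing : ∀ v ∈ W', ∀ c ∈ W', Jr v c → v = c := by
        intro v hv c hc hJ
        rcases hmemW'3 hv with rfl|rfl|rfl <;> rcases hmemW'3 hc with rfl|rfl|rfl
        · rfl
        · exact absurd hJ h1
        · exact absurd hJ h2
        · exact absurd (Jr_symm hidem hJ) h1
        · rfl
        · exact absurd hJ h3
        · exact absurd (Jr_symm hidem hJ) h2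
        · exact absurd (Jr_symm hidem hJ) h3
        · rfl
      set b := p*q*r with hbdef
      have hbW' : b ∈ W' := hW'cl (p*q) (hW'cl p hpW' q hqW') r hrW'
      have hbbot : ∀ w ∈ W', ple b w := by
        intro w hw
        rcases hmemW'3 hw with h|h|h <;> rw [h]
        · exact ple_trans hidem (ple_mul_left hidem (p*q) r) (ple_mul_left hidem p q)
        · exact ple_trans hidem (ple_mul_left hidem (p*q) r) (ple_mul_right hidem p q)
        · exact ple_mul_right hidem (p*q) r
      have habs_b : ∀ x ∈ Δ, x*b = b ∧ b*x = b := by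
        intro x hx
        constructor
        · exact hsing (x*b) (hcross x (hmemΔ hx).1 b hbW').1 b hbW'
            ⟨ple_mul_right hidem x b, hbbot _ (hcross x (hmemΔ hx).1 b hbW').1⟩
        · exact hsing (b*x) (hcross x (hmemΔ hx).1 b hbW').2 b hbW'
            ⟨ple_mul_left hidem b x, hbbot _ (hcross x (hmemΔ hx).1 b hbW').2⟩
      obtain ⟨w1, w2, hw1, hw2, hw12, hw1b, hw2b⟩ :
          ∃ w1 w2, w1 ∈ W' ∧ w2 ∈ W' ∧ w1 ≠ w2 ∧ w1 ≠ b ∧ w2 ≠ b := by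
        rcases hmemW'3 hbW' with h|h|h
        · exact ⟨q, r, hqW', hrW', hqr, by rw [h]; exact Ne.symm hpq,
            by rw [h]; exact Ne.symm hpr⟩
        · exact ⟨p, r, hpW', hrW', hpr, by rw [h]; exact hpq,
            by rw [h]; exact Ne.symm hqr⟩
        · exact ⟨p, q, hpW', hqW', hpq, by rw [h]; exact hpr, by rw [h]; exact hqr⟩
      have h3set : ∀ v ∈ W', v = w1 ∨ v = w2 ∨ v = b := by
        have hsub : ({w1, w2, b} : Finset S) ⊆ W' := by
          intro c hc
          rcases Finset.mem_insert.1 hc with rfl | hc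
          · exact hw1
          rcases Finset.mem_insert.1 hc with rfl | hc
          · exact hw2
          rw [Finset.mem_singleton.1 hc]; exact hbW'
        have hcard : ({w1, w2, b} : Finset S).card = 3 := by
          rw [Finset.card_insert_of_notMem (by simp [hw12, hw1b]),
            Finset.card_insert_of_notMem (by simp [hw2b]), Finset.card_singleton]
        have := Finset.eq_of_subset_of_card_le hsub (by omega)
        intro v hv
        rw [← this] at hv
        simpa using hv
      have hval : ∀ w ∈ W', ∀ x ∈ Δ, x*w = m*w ∧ w*x = m*w := by
        intro w hw x hx
        have hxm : Jr x m := Jr_symm hidem (hmemΔ hx).2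
        have h1' : Jr (x*w) (m*w) := Jr_mul_left hidem hxm w
        have e1 : x*w = m*w := hsing _ (hcross x (hmemΔ hx).1 w hw).1 _
          (hcross m hm w hw).1 h1'
        have h2' : Jr (w*x) (x*w) := Jr_comm hidem w x
        have e2 : w*x = x*w := hsing _ (hcross x (hmemΔ hx).1 w hw).2 _
          (hcross x (hmemΔ hx).1 w hw).1 h2'
        exact ⟨e1, e2.trans e1⟩
      have hbuild : ∀ w ∈ W', w ≠ b → (m*w = w ∨ m*w = b) →
          ∃ V : Finset S, V.card = 2 ∧ V ⊆ W' ∧ (∀ a ∈ V, ∀ b ∈ V, a*b ∈ V) ∧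
            (∀ x ∈ Δ, ∀ v ∈ V, x*v ∈ V ∧ v*x ∈ V) := by
        intro w hw hwb hmw
        refine ⟨{w, b}, card2 _ _ hwb, sub2 _ _ hw hbW', ?_, ?_⟩
        · intro a ha c hc
          rcases mem2 ha with h|h <;> rcases mem2 hc with h'|h' <;> rw [h, h']
          · rw [hidem]; simp
          · rw [hsing (w*b) (hW'cl w hw b hbW') b hbW'
              ⟨ple_mul_right hidem w b, hbbot _ (hW'cl w hw b hbW')⟩]
            simp
          · rw [hsing (b*w) (hW'cl b hbW' w hw) b hbW'
              ⟨ple_mul_left hidem b w, hbbot _ (hW'cl b hbW' w hw)⟩]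
            simp
          · rw [hidem]; simp
        · intro x hx v hv
          rcases mem2 hv with h|h <;> rw [h]
          · rw [(hval w hw x hx).1, (hval w hw x hx).2]
            rcases hmw with h2|h2 <;> rw [h2] <;> simp
          · rw [(habs_b x hx).1, (habs_b x hx).2]; simp
      by_cases hy : m*w1 = w2
      · apply hbuild w2 hw2 hw2b
        left
        calc m*w2 = m*(m*w1) := by rw [hy]
          _ = (m*m)*w1 := by rw [mul_assoc]
          _ = m*w1 := by rw [hidem m]
          _ = w2 := hy
      · apply hbuild w1 hw1 hw1b
        rcases h3set (m*w1) (hcross m hm w1 hw1).1 with h|h|h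
        · exact Or.inl h
        · exact absurd h hy
        · exact Or.inr h

end special

section recursion
variable (hidem : ∀ x : S, x * x = x)
include hidem

lemma recursion (hsmall : ∀ D : Finset S, (∀ x ∈ D, ∀ y ∈ D, Jr x y) → D.card ≤ 5) :
    ∀ n : ℕ, ∀ W : Finset S, W.card ≤ n → 6 ≤ W.card →
    (∀ x ∈ W, ∀ y ∈ W, x*y ∈ W) → (∀ a ∈ W, ∀ b : S, Jr a b → b ∈ W) →
    ∃ T : Finset S, T.card = 6 ∧ ∀ x ∈ T, ∀ y ∈ T, x*y ∈ T := by
  intro n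
  induction n with
  | zero => intro W h0 h6 _ _; omega
  | succ n ih =>
    intro W hWn hW6 hclosed hsat
    classical
    have hWne : W.toList ≠ [] := by
      intro h
      have hlen := Finset.length_toList W
      rw [h] at hlen
      simp at hlen
      omega
    obtain ⟨m, hmli, hmax0⟩ := exists_max hidem W.toList hWne
    have hm : m ∈ W := Finset.mem_toList.1 hmli
    have hmax : ∀ w ∈ W, ple m w → ple w m := fun w hw =>
      hmax0 w (Finset.mem_toList.2 hw)
    set Δ := W.filter (fun w => Jr m w) with hΔdef
    set W' := W.filter (fun w => ¬ Jr m w) with hW'def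
    have hmemΔ : ∀ {x}, x ∈ Δ → x ∈ W ∧ Jr m x := fun h => Finset.mem_filter.1 h
    have hmemW' : ∀ {v}, v ∈ W' → v ∈ W ∧ ¬ Jr m v := fun h => Finset.mem_filter.1 h
    have hΔJ : ∀ x ∈ Δ, ∀ y ∈ Δ, Jr x y := fun x hx y hy =>
      Jr_trans hidem (Jr_symm hidem (hmemΔ hx).2) (hmemΔ hy).2
    have hΔcl : ∀ x ∈ Δ, ∀ y ∈ Δ, x*y ∈ Δ := by
      intro x hx y hy
      refine Finset.mem_filter.2 ⟨hclosed x (hmemΔ hx).1 y (hmemΔ hy).1, ?_⟩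
      exact Jr_trans hidem (hmemΔ hx).2 (Jr_absorb hidem (hΔJ x hx y hy))
    have hmΔ : m ∈ Δ := Finset.mem_filter.2 ⟨hm, Jr_refl hidem m⟩
    have hdropJ : ∀ u ∈ W, ∀ v ∈ W', ¬ Jr m (u*v) ∧ ¬ Jr m (v*u) := by
      intro u hu v hv
      constructor
      · intro hJ
        have h1 : ple m v := ple_trans hidem hJ.1 (ple_mul_right hidem u v)
        exact (hmemW' hv).2 ⟨h1, hmax v (hmemW' hv).1 h1⟩
      · intro hJ
        have h1 : ple m v := ple_trans hidem hJ.1 (ple_mul_left hidem v u)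
        exact (hmemW' hv).2 ⟨h1, hmax v (hmemW' hv).1 h1⟩
    have hcross : ∀ x ∈ W, ∀ v ∈ W', x*v ∈ W' ∧ v*x ∈ W' := by
      intro x hx v hv
      constructor
      · exact Finset.mem_filter.2 ⟨hclosed x hx v (hmemW' hv).1, (hdropJ x hx v hv).1⟩
      · exact Finset.mem_filter.2 ⟨hclosed v (hmemW' hv).1 x hx, (hdropJ x hx v hv).2⟩
    have hsum : Δ.card + W'.card = W.card :=
      Finset.card_filter_add_card_filter_not _
    have hΔ5 : Δ.card ≤ 5 := hsmall Δ hΔJ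
    have hΔpos : 0 < Δ.card := Finset.card_pos.2 ⟨m, hmΔ⟩
    by_cases h6' : 6 ≤ W'.card
    · refine ih W' (by omega) h6' ?_ ?_
      · intro x hx y hy
        exact (hcross x (hmemW' hx).1 y hy).1
      · intro v hv b hJ
        refine Finset.mem_filter.2 ⟨hsat v (hmemW' hv).1 b hJ, ?_⟩
        intro hmb
        exact (hmemW' hv).2 (Jr_trans hidem hmb (Jr_symm hidem hJ))
    · push_neg at h6'
      have hbuildT : ∀ A : Finset S, A ⊆ Δ → A.card = 6 - W'.card →
          (∀ x ∈ A, ∀ y ∈ A, x*y ∈ A) →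
          ∃ T : Finset S, T.card = 6 ∧ ∀ x ∈ T, ∀ y ∈ T, x*y ∈ T := by
        intro A hAsub hAcard hAcl
        have hdisj : Disjoint A W' := by
          refine Finset.disjoint_left.2 ?_
          intro c hcA hcW'
          exact (hmemW' hcW').2 (hmemΔ (hAsub hcA)).2
        refine ⟨A ∪ W', ?_, ?_⟩
        · rw [Finset.card_union_of_disjoint hdisj, hAcard]; omega
        · intro x hx y hy
          rcases Finset.mem_union.1 hx with hx' | hx' <;>
            rcases Finset.mem_union.1 hy with hy' | hy'
          · exact Finset.mem_union_left _ (hAcl x hx' y hy')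
          · exact Finset.mem_union_right _
              (hcross x (hmemΔ (hAsub hx')).1 y hy').1
          · exact Finset.mem_union_right _
              (hcross y (hmemΔ (hAsub hy')).1 x hx').2
          · exact Finset.mem_union_right _ (hcross x (hmemW' hx').1 y hy').1
      by_cases hkfull : 6 - W'.card = Δ.card
      · exact hbuildT Δ (subset_refl Δ) hkfull.symm hΔcl
      · have hklt : 6 - W'.card < Δ.card := by omega
        by_cases hLrow : ∃ u ∈ Δ, 6 - W'.card ≤ (Δ.filter (fun w => Lr u w)).card
        · obtain ⟨u, hu, hcard⟩ := hLrow
          obtain ⟨A, hAsub, hAcard⟩ := Finset.exists_subset_card_eq hcard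
          refine hbuildT A (hAsub.trans (Finset.filter_subset _ _)) hAcard ?_
          intro x hx y hy
          have hx' := Finset.mem_filter.1 (hAsub hx)
          have hy' := Finset.mem_filter.1 (hAsub hy)
          have hL : Lr x y := Lr_trans hidem (Lr_symm hidem hx'.2) hy'.2
          rw [hL.1]
          exact hx
        by_cases hRrow : ∃ u ∈ Δ, 6 - W'.card ≤ (Δ.filter (fun w => Rr u w)).card
        · obtain ⟨u, hu, hcard⟩ := hRrow
          obtain ⟨A, hAsub, hAcard⟩ := Finset.exists_subset_card_eq hcard
          refine hbuildT A (hAsub.trans (Finset.filter_subset _ _)) hAcard ?_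
          intro x hx y hy
          have hx' := Finset.mem_filter.1 (hAsub hx)
          have hy' := Finset.mem_filter.1 (hAsub hy)
          have hR : Rr x y := Rr_trans hidem (Rr_symm hidem hx'.2) hy'.2
          rw [hR.1]
          exact hy
        · push_neg at hLrow hRrow
          have hm_self_L : m ∈ Δ.filter (fun w => Lr m w) :=
            Finset.mem_filter.2 ⟨hmΔ, Lr_refl hidem m⟩
          have hk2 : 2 ≤ 6 - W'.card := by
            by_contra h
            have hposL : 0 < (Δ.filter (fun w => Lr m w)).card :=
              Finset.card_pos.2 ⟨m, hm_self_L⟩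
            have := hLrow m hmΔ
            omega
          have hk3 : 3 ≤ 6 - W'.card := by
            by_contra h
            obtain ⟨u, hu, v, hv, huv⟩ := Finset.one_lt_card.1
              (show 1 < Δ.card by omega)
            by_cases he : u*v = u
            · have hLuv : Lr u v := by
                have h2 := Lr_mul hidem (hΔJ u hu v hv)
                rwa [he] at h2
              have hsub : ({u, v} : Finset S) ⊆ Δ.filter (fun w => Lr u w) := by
                intro c hc
                rcases Finset.mem_insert.1 hc with rfl | hc
                · exact Finset.mem_filter.2 ⟨hu, Lr_refl hidem c⟩
                · rw [Finset.mem_singleton.1 hc]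
                  exact Finset.mem_filter.2 ⟨hv, hLuv⟩
              have hc2 : ({u, v} : Finset S).card = 2 := by
                rw [Finset.card_insert_of_notMem (by simp [huv]),
                  Finset.card_singleton]
              have := Finset.card_le_card hsub
              have := hLrow u hu
              omega
            · have hRuv : Rr u (u*v) := Rr_mul hidem (hΔJ u hu v hv)
              have huvΔ : u*v ∈ Δ := hΔcl u hu v hv
              have hsub : ({u, u*v} : Finset S) ⊆ Δ.filter (fun w => Rr u w) := by
                intro c hc
                rcases Finset.mem_insert.1 hc with rfl | hc
                · exact Finset.mem_filter.2 ⟨hu, Rr_refl hidem c⟩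
                · rw [Finset.mem_singleton.1 hc]
                  exact Finset.mem_filter.2 ⟨huvΔ, hRuv⟩
              have hc2 : ({u, u*v} : Finset S).card = 2 := by
                rw [Finset.card_insert_of_notMem (by simp [Ne.symm he]),
                  Finset.card_singleton]
              have := Finset.card_le_card hsub
              have := hRrow u hu
              omega
          have hgc := grid_card hidem Δ hΔJ hΔcl hmΔ
          have hLm := hLrow m hmΔ
          have hRm := hRrow m hmΔ
          set a := (Δ.filter (fun w => Lr m w)).card with hadef
          set b := (Δ.filter (fun w => Rr m w)).card with hbdef
          have hK : 6 - W'.card = 3 ∧ Δ.card = 4 := by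
            have ha3 : a ≤ 3 := by omega
            have hb3 : b ≤ 3 := by omega
            interval_cases a <;> interval_cases b <;> omega
          have hW3 : W'.card = 3 := by omega
          exact special hidem W hclosed hsat m hm hmax hK.2 hW3
            (fun u hu => by
              show (Δ.filter (fun w => Lr u w)).card ≤ 2
              have := hLrow u hu
              omega)
            (fun u hu => by
              show (Δ.filter (fun w => Rr u w)).card ≤ 2
              have := hRrow u hu
              omega)

end recursion

section grids
variable (hidem : ∀ x : S, x * x = x)
include hidem

lemma grid23 (a b c d e : S)
    (hJ : ∀ x ∈ ([a,b,c,d,e] : List S), ∀ y ∈ ([a,b,c,d,e] : List S), Jr x y)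
    (hRab : ¬ Rr a b) (hLcd : ¬ Lr c d) (hLce : ¬ Lr c e) (hLde : ¬ Lr d e) :
    ∃ T : Finset S, T.card = 6 ∧ ∀ x ∈ T, ∀ y ∈ T, x * y ∈ T := by
  apply grid hidem (show 2*3 = 6 by norm_num) ![a, b] ![c, d, e]
  · intro i j
    fin_cases i <;> fin_cases j <;> exact hJ _ (by simp) _ (by simp)
  · intro i i'
    fin_cases i <;> fin_cases i' <;> exact hJ _ (by simp) _ (by simp)
  · intro j j'
    fin_cases j <;> fin_cases j' <;> exact hJ _ (by simp) _ (by simp)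
  · intro i i' hne hR
    fin_cases i <;> fin_cases i'
    · exact hne rfl
    · exact hRab hR
    · exact hRab (Rr_symm hidem hR)
    · exact hne rfl
  · intro j j' hne hL
    fin_cases j <;> fin_cases j'
    · exact hne rfl
    · exact hLcd hL
    · exact hLce hL
    · exact hLcd (Lr_symm hidem hL)
    · exact hne rfl
    · exact hLde hL
    · exact hLce (Lr_symm hidem hL)
    · exact hLde (Lr_symm hidem hL)
    · exact hne rfl

lemma grid32 (a b e c d : S)
    (hJ : ∀ x ∈ ([a,b,e,c,d] : List S), ∀ y ∈ ([a,b,e,c,d] : List S), Jr x y)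
    (hRab : ¬ Rr a b) (hRae : ¬ Rr a e) (hRbe : ¬ Rr b e) (hLcd : ¬ Lr c d) :
    ∃ T : Finset S, T.card = 6 ∧ ∀ x ∈ T, ∀ y ∈ T, x * y ∈ T := by
  apply grid hidem (show 3*2 = 6 by norm_num) ![a, b, e] ![c, d]
  · intro i j
    fin_cases i <;> fin_cases j <;> exact hJ _ (by simp) _ (by simp)
  · intro i i'
    fin_cases i <;> fin_cases i' <;> exact hJ _ (by simp) _ (by simp)
  · intro j j'
    fin_cases j <;> fin_cases j' <;> exact hJ _ (by simp) _ (by simp)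
  · intro i i' hne hR
    fin_cases i <;> fin_cases i'
    · exact hne rfl
    · exact hRab hR
    · exact hRae hR
    · exact hRab (Rr_symm hidem hR)
    · exact hne rfl
    · exact hRbe hR
    · exact hRae (Rr_symm hidem hR)
    · exact hRbe (Rr_symm hidem hR)
    · exact hne rfl
  · intro j j' hne hL
    fin_cases j <;> fin_cases j'
    · exact hne rfl
    · exact hLcd hL
    · exact hLcd (Lr_symm hidem hL)
    · exact hne rfl

end grids
end Band6

open Band6 in
/-- Every idempotent semigroup with at least 6 elements has a subsemigroup
of order exactly 6. -/
theorem stmt_6 (S : Type*) [Semigroup S] (hidem : ∀ x : S, x * x = x)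
    (hcard : ∃ f : Fin 6 → S, Function.Injective f) :
    ∃ T : Finset S, T.card = 6 ∧ ∀ x ∈ T, ∀ y ∈ T, x * y ∈ T := by
  classical
  obtain ⟨z, hz⟩ := hcard
  by_cases h1 : ∃ g : Fin 6 → S, Function.Injective g ∧ ∀ i j, Lr (g i) (g j)
  · obtain ⟨g, hg, hL⟩ := h1
    exact six_table g hg (fun i j => ⟨i, (hL i j).1⟩)
  by_cases h2 : ∃ g : Fin 6 → S, Function.Injective g ∧ ∀ i j, Rr (g i) (g j)
  · obtain ⟨g, hg, hR⟩ := h2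
    exact six_table g hg (fun i j => ⟨j, (hR i j).1⟩)
  by_cases h3 : ∃ g : Fin 6 → S, Function.Injective g ∧ ∀ i j, Jr (g i) (g j)
  · -- CASE 3 : a big rectangular class
    obtain ⟨g, hg, hJ⟩ := h3
    have hnotL : ∃ i j, ¬ Lr (g i) (g j) := by
      by_contra h; push_neg at h; exact h1 ⟨g, hg, h⟩
    have hnotR : ∃ i j, ¬ Rr (g i) (g j) := by
      by_contra h; push_neg at h; exact h2 ⟨g, hg, h⟩
    obtain ⟨ic, jc, hcd⟩ := hnotL
    obtain ⟨ia, ja, hab⟩ := hnotR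
    by_cases hE : ∃ k, ¬ Lr (g k) (g ic) ∧ ¬ Lr (g k) (g jc)
    · obtain ⟨ke, hke⟩ := hE
      apply grid23 hidem (g ia) (g ja) (g ic) (g jc) (g ke)
      · intro x hx y hy
        simp only [List.mem_cons, List.not_mem_nil, or_false] at hx hy
        rcases hx with rfl|rfl|rfl|rfl|rfl <;> rcases hy with rfl|rfl|rfl|rfl|rfl <;>
          exact hJ _ _
      · exact hab
      · exact hcd
      · exact fun h => hke.1 (Lr_symm hidem h)
      · exact fun h => hke.2 (Lr_symm hidem h)
    · push_neg at hE
      by_cases hE2 : ∃ k, ¬ Rr (g k) (g ia) ∧ ¬ Rr (g k) (g ja)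
      · obtain ⟨ke, hke⟩ := hE2
        apply grid32 hidem (g ia) (g ja) (g ke) (g ic) (g jc)
        · intro x hx y hy
          simp only [List.mem_cons, List.not_mem_nil, or_false] at hx hy
          rcases hx with rfl|rfl|rfl|rfl|rfl <;> rcases hy with rfl|rfl|rfl|rfl|rfl <;>
            exact hJ _ _
        · exact hab
        · exact fun h => hke.1 (Rr_symm hidem h)
        · exact fun h => hke.2 (Rr_symm hidem h)
        · exact hcd
      · push_neg at hE2
        -- pigeonhole: 6 elements, ≤2 columns, ≤2 rows
        exfalso
        set f : Fin 6 → Bool × Bool := fun k =>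
          (if Lr (g k) (g ic) then true else false,
           if Rr (g k) (g ia) then true else false) with hfdef
        have hcard : Fintype.card (Bool × Bool) < Fintype.card (Fin 6) := by simp
        obtain ⟨k, l, hkl, hfeq⟩ := Fintype.exists_ne_map_eq_of_card_lt f hcard
        have hLkl : Lr (g k) (g l) := by
          by_cases hLk : Lr (g k) (g ic) <;> by_cases hLl : Lr (g l) (g ic)
          · exact Lr_trans hidem hLk (Lr_symm hidem hLl)
          · simp [hfdef, hLk, hLl] at hfeq
          · simp [hfdef, hLk, hLl] at hfeq
          · have hk' : Lr (g k) (g jc) := hE k hLk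
            have hl' : Lr (g l) (g jc) := hE l hLl
            exact Lr_trans hidem hk' (Lr_symm hidem hl')
        have hRkl : Rr (g k) (g l) := by
          by_cases hRk : Rr (g k) (g ia) <;> by_cases hRl : Rr (g l) (g ia)
          · exact Rr_trans hidem hRk (Rr_symm hidem hRl)
          · simp [hfdef, hRk, hRl] at hfeq
          · simp [hfdef, hRk, hRl] at hfeq
          · have hk' : Rr (g k) (g ja) := hE2 k hRk
            have hl' : Rr (g l) (g ja) := hE2 l hRl
            exact Rr_trans hidem hk' (Rr_symm hidem hl')
        exact hkl (hg (RL_eq hidem hRkl hLkl))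
  · -- CASE 4 : all classes small
    have hsmall : ∀ D : Finset S, (∀ x ∈ D, ∀ y ∈ D, Jr x y) → D.card ≤ 5 := by
      intro D hD
      by_contra h
      push_neg at h
      obtain ⟨E, hEsub, hEcard⟩ := Finset.exists_subset_card_eq (s := D) (n := 6) (by omega)
      have e := Finset.equivFinOfCardEq hEcard
      apply h3
      refine ⟨fun i => ((e.symm i : E) : S), ?_, ?_⟩
      · intro i j hij
        have : (e.symm i : E) = (e.symm j : E) := Subtype.ext hij
        simpa using e.symm.injective this
      · intro i j
        exact hD _ (hEsub (e.symm i).2) _ (hEsub (e.symm j).2)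
    have hclfin : ∀ p : S, ∃ C : Finset S, ∀ b, b ∈ C ↔ Jr p b := by
      intro p
      have hfin : {b | Jr p b}.Finite := by
        by_contra hinf
        obtain ⟨t, hts, htc⟩ :=
          (show Set.Infinite {b | Jr p b} from hinf).exists_subset_card_eq 6
        have hpair : ∀ x ∈ t, ∀ y ∈ t, Jr x y := by
          intro x hx y hy
          exact Jr_trans hidem (Jr_symm hidem (hts hx)) (hts hy)
        have := hsmall t hpair
        omega
      exact ⟨hfin.toFinset, fun b => hfin.mem_toFinset⟩
    choose Cl hCl using hclfin
    set W : Finset S := ((Finset.univ : Finset (Fin 6)).powerset.filter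
      (fun Y => Y.Nonempty)).biUnion
      (fun Y => Cl (pr (z 0) (Y.toList.map z))) with hWdef
    have hclsat : ∀ p : S, ∀ u, Jr p u → ∀ b, Jr u b → b ∈ Cl p := by
      intro p u hpu b hub
      exact (hCl p b).2 (Jr_trans hidem hpu hub)
    have hlistne : ∀ Y : Finset (Fin 6), Y.Nonempty → (Y.toList.map z) ≠ [] := by
      intro Y hY h
      rw [List.map_eq_nil_iff, Finset.toList_eq_nil] at h
      exact hY.ne_empty h
    have hmemW : ∀ {u : S}, u ∈ W ↔
        ∃ Y : Finset (Fin 6), Y.Nonempty ∧ Jr (pr (z 0) (Y.toList.map z)) u := by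
      intro u
      rw [hWdef]
      simp only [Finset.mem_biUnion, Finset.mem_filter, Finset.mem_powerset]
      constructor
      · rintro ⟨Y, ⟨_, hYne⟩, hu⟩
        exact ⟨Y, hYne, (hCl _ u).1 hu⟩
      · rintro ⟨Y, hYne, hJu⟩
        exact ⟨Y, ⟨Finset.subset_univ Y, hYne⟩, (hCl _ u).2 hJu⟩
    have hzW : ∀ i, z i ∈ W := by
      intro i
      apply hmemW.2
      refine ⟨{i}, Finset.singleton_nonempty i, ?_⟩
      rw [Finset.toList_singleton]
      show Jr (pr (z 0) [z i]) (z i)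
      exact Jr_refl hidem (z i)
    have hW6 : 6 ≤ W.card := by
      have hsub : (Finset.univ.image z) ⊆ W := by
        intro u hu
        obtain ⟨i, _, rfl⟩ := Finset.mem_image.1 hu
        exact hzW i
      have himg : (Finset.univ.image z).card = 6 := by
        rw [Finset.card_image_of_injective _ hz, Finset.card_univ, Fintype.card_fin]
      calc 6 = (Finset.univ.image z).card := himg.symm
        _ ≤ W.card := Finset.card_le_card hsub
    have hWclosed : ∀ x ∈ W, ∀ y ∈ W, x*y ∈ W := by
      intro x hx y hy
      obtain ⟨Y, hYne, hJx⟩ := hmemW.1 hx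
      obtain ⟨Y', hY'ne, hJy⟩ := hmemW.1 hy
      apply hmemW.2
      have hUne : (Y ∪ Y').Nonempty := hYne.inl
      refine ⟨Y ∪ Y', hUne, ?_⟩
      have hne1 := hlistne Y hYne
      have hne2 := hlistne Y' hY'ne
      have hne3 := hlistne _ hUne
      have happ : pr (z 0) ((Y.toList.map z) ++ (Y'.toList.map z)) =
          pr (z 0) (Y.toList.map z) * pr (z 0) (Y'.toList.map z) :=
        pr_append _ hne1 hne2
      have htf : ((Y.toList.map z) ++ (Y'.toList.map z)).toFinset =
          (((Y ∪ Y').toList).map z).toFinset := by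
        ext s0
        simp only [List.toFinset_append, Finset.mem_union, List.mem_toFinset,
          List.mem_map, Finset.mem_toList, Finset.mem_union]
        constructor
        · rintro (⟨i, hi, rfl⟩ | ⟨i, hi, rfl⟩)
          · exact ⟨i, Or.inl hi, rfl⟩
          · exact ⟨i, Or.inr hi, rfl⟩
        · rintro ⟨i, hi | hi, rfl⟩
          · exact Or.inl ⟨i, hi, rfl⟩
          · exact Or.inr ⟨i, hi, rfl⟩
      have hJ1 : Jr (pr (z 0) (((Y ∪ Y').toList).map z))
          (pr (z 0) ((Y.toList.map z) ++ (Y'.toList.map z))) :=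
        J_toFinset hidem _ htf.symm hne3
          (fun h => hne1 (List.append_eq_nil_iff.1 h).1)
      rw [happ] at hJ1
      have hJ2 : Jr (pr (z 0) (Y.toList.map z) * pr (z 0) (Y'.toList.map z)) (x*y) :=
        Jr_trans hidem (Jr_mul_left hidem hJx (pr (z 0) (Y'.toList.map z)))
          (Jr_mul_right hidem hJy x)
      exact Jr_trans hidem hJ1 hJ2
    have hWsat : ∀ a ∈ W, ∀ b : S, Jr a b → b ∈ W := by
      intro a ha b hab
      obtain ⟨Y, hYne, hJa⟩ := hmemW.1 ha
      exact hmemW.2 ⟨Y, hYne, Jr_trans hidem hJa hab⟩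
    exact recursion hidem hsmall W.card W le_rfl hW6 hWclosed hWsat
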